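/- Let μ be a probability measure on ℝ with compact support, let f : ℝ → ℝ be continuous with g(λ) = ∫₀^λ (f'(s))² ds for f ∈ C¹, and let u = ∫ λ dμ(λ) (assume u lies in the support interval). If ∫ (λ g(λ) - f(λ)²) dμ(λ) = u·∫ g dμ - (∫ f dμ)², then (∫ f dμ - f(u))² ≤ 0, hence ∫ f dμ = f(u). -/

import Mathlib

open MeasureTheory intervalIntegral

lemma ym_integrable (μ : Measure ℝ) [IsFiniteMeasure μ]
    (K : Set ℝ) (hK : IsCompact K) (hμK : μ Kᶜ = 0)
    {h : ℝ → ℝ} (hh : Continuous h) : Integrable h μ := by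
  obtain ⟨C, hC⟩ := hK.exists_bound_of_continuousOn hh.continuousOn
  refine Integrable.mono' (integrable_const C) hh.aestronglyMeasurable ?_
  have : ∀ᵐ x ∂μ, x ∉ Kᶜ := measure_eq_zero_iff_ae_notMem.mp hμK
  filter_upwards [this] with x hx
  exact hC x (not_not.mp hx)

lemma ym_sq_int_le {h : ℝ → ℝ} (hh : Continuous h) {c d : ℝ} (hcd : c ≤ d) :
    (∫ s in c..d, h s) ^ 2 ≤ (d - c) * ∫ s in c..d, (h s) ^ 2 := by
  rcases eq_or_lt_of_le hcd with rfl | hlt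
  · simp
  set I := ∫ s in c..d, h s with hI
  have h1 : (0:ℝ) ≤ ∫ s in c..d, ((d - c) * h s - I) ^ 2 :=
    intervalIntegral.integral_nonneg hcd (fun x _ => sq_nonneg _)
  have h2 : ∫ s in c..d, ((d - c) * h s - I) ^ 2
      = (d - c) ^ 2 * (∫ s in c..d, (h s) ^ 2) - (d - c) * I ^ 2 := by
    have e : ∀ s, ((d - c) * h s - I) ^ 2
        = ((d - c) ^ 2 * (h s) ^ 2 - (2 * (d - c) * I) * h s) + I ^ 2 := by
      intro s; ring
    simp_rw [e]
    rw [intervalIntegral.integral_add, intervalIntegral.integral_sub,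
      intervalIntegral.integral_const_mul, intervalIntegral.integral_const_mul,
      intervalIntegral.integral_const]
    · simp only [smul_eq_mul, ← hI]; ring
    · exact (continuous_const.mul (hh.pow 2)).intervalIntegrable c d
    · exact (continuous_const.mul hh).intervalIntegrable c d
    · exact ((continuous_const.mul (hh.pow 2)).sub (continuous_const.mul hh)).intervalIntegrable c d
    · exact intervalIntegrable_const
  rw [h2] at h1
  nlinarith [sub_pos.mpr hlt, sq_nonneg I]

theorem young_measure_flux_identity (μ : Measure ℝ) [IsProbabilityMeasure μ]
    (K : Set ℝ) (hK : IsCompact K) (hμK : μ Kᶜ = 0)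
    (f g : ℝ → ℝ) (hf : ContDiff ℝ 1 f)
    (hg : ∀ l : ℝ, g l = ∫ s in (0:ℝ)..l, (deriv f s) ^ 2)
    (u : ℝ) (hu : u = ∫ l, l ∂μ) (huK : u ∈ K)
    (hcomm : ∫ l, (l * g l - (f l) ^ 2) ∂μ =
      u * (∫ l, g l ∂μ) - (∫ l, f l ∂μ) ^ 2) :
    ((∫ l, f l ∂μ) - f u) ^ 2 ≤ 0 ∧ (∫ l, f l ∂μ) = f u := by
  have hfc : Continuous f := hf.continuous
  have hdc : Continuous (deriv f) := hf.continuous_deriv le_rfl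
  have hgc : Continuous g := by
    have : Continuous fun l => ∫ s in (0:ℝ)..l, (deriv f s) ^ 2 :=
      intervalIntegral.continuous_primitive
        (fun a b => ((hdc.pow 2).intervalIntegrable a b)) 0
    have hge : g = fun l => ∫ s in (0:ℝ)..l, (deriv f s) ^ 2 := funext hg
    rw [hge]; exact this
  -- FTC facts
  have hderiv : ∀ a b : ℝ, f b - f a = ∫ s in a..b, deriv f s := by
    intro a b
    exact (intervalIntegral.integral_deriv_eq_sub
      (fun x _ => (hf.differentiable one_ne_zero).differentiableAt)
      (hdc.intervalIntegrable a b)).symm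
  have hgsub : ∀ a b : ℝ, g b - g a = ∫ s in a..b, (deriv f s) ^ 2 := by
    intro a b
    rw [hg, hg]
    exact intervalIntegral.integral_interval_sub_left
      ((hdc.pow 2).intervalIntegrable 0 b) ((hdc.pow 2).intervalIntegrable 0 a)
  -- pointwise Cauchy-Schwarz inequality
  have key : ∀ l : ℝ, (f l - f u) ^ 2 ≤ (l - u) * (g l - g u) := by
    intro l
    rcases le_total u l with hle | hle
    · rw [hderiv u l, hgsub u l]
      exact ym_sq_int_le hdc hle
    · have h1 := ym_sq_int_le hdc hle
      rw [← hderiv l u, ← hgsub l u] at h1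
      calc (f l - f u) ^ 2 = (f u - f l) ^ 2 := by ring
        _ ≤ (u - l) * (g u - g l) := h1
        _ = (l - u) * (g l - g u) := by ring
  -- integrability
  have If : Integrable f μ := ym_integrable μ K hK hμK hfc
  have If2 : Integrable (fun l => (f l) ^ 2) μ := ym_integrable μ K hK hμK (hfc.pow 2)
  have Ig : Integrable g μ := ym_integrable μ K hK hμK hgc
  have Il : Integrable (fun l : ℝ => l) μ := ym_integrable μ K hK hμK continuous_id
  have Ilg : Integrable (fun l => l * g l) μ :=
    ym_integrable μ K hK hμK (continuous_id.mul hgc)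
  have Ilhs : Integrable (fun l => (f l - f u) ^ 2) μ :=
    ym_integrable μ K hK hμK ((hfc.sub continuous_const).pow 2)
  have Irhs : Integrable (fun l => (l - u) * (g l - g u)) μ :=
    ym_integrable μ K hK hμK
      ((continuous_id.sub continuous_const).mul (hgc.sub continuous_const))
  have hint : ∫ l, (f l - f u) ^ 2 ∂μ ≤ ∫ l, (l - u) * (g l - g u) ∂μ :=
    integral_mono Ilhs Irhs key
  -- compute LHS
  have eA : ∫ l, (f l - f u) ^ 2 ∂μ
      = ∫ l, (f l) ^ 2 ∂μ - 2 * f u * ∫ l, f l ∂μ + (f u) ^ 2 := by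
    have e : ∀ l, (f l - f u) ^ 2 = (f l) ^ 2 - (2 * f u) * f l + (f u) ^ 2 := by
      intro l; ring
    simp_rw [e]
    have I1 : Integrable (fun l => f l ^ 2 - 2 * f u * f l) μ :=
      ym_integrable μ K hK hμK ((hfc.pow 2).sub (continuous_const.mul hfc))
    have I2 : Integrable (fun l => 2 * f u * f l) μ :=
      ym_integrable μ K hK hμK (continuous_const.mul hfc)
    rw [integral_add I1 (integrable_const _),
      integral_sub If2 I2, MeasureTheory.integral_const_mul, MeasureTheory.integral_const]
    simp [measure_univ]
  -- compute RHS
  have eB : ∫ l, (l - u) * (g l - g u) ∂μ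
      = ∫ l, l * g l ∂μ - u * ∫ l, g l ∂μ := by
    have e : ∀ l, (l - u) * (g l - g u)
        = l * g l - u * g l - g u * l + u * g u := by intro l; ring
    simp_rw [e]
    have J1 : Integrable (fun l => l * g l - u * g l - g u * l) μ :=
      ym_integrable μ K hK hμK
        (((continuous_id.mul hgc).sub (continuous_const.mul hgc)).sub
          (continuous_const.mul continuous_id))
    have J2 : Integrable (fun l => l * g l - u * g l) μ :=
      ym_integrable μ K hK hμK
        ((continuous_id.mul hgc).sub (continuous_const.mul hgc))
    have J3 : Integrable (fun l => u * g l) μ :=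
      ym_integrable μ K hK hμK (continuous_const.mul hgc)
    have J4 : Integrable (fun l => g u * l) μ :=
      ym_integrable μ K hK hμK (continuous_const.mul continuous_id)
    rw [integral_add J1 (integrable_const _),
      integral_sub J2 J4,
      integral_sub Ilg J3,
      MeasureTheory.integral_const_mul, MeasureTheory.integral_const_mul, MeasureTheory.integral_const, ← hu]
    simp [measure_univ]
    ring
  have eC : ∫ l, (l * g l - (f l) ^ 2) ∂μ
      = ∫ l, l * g l ∂μ - ∫ l, (f l) ^ 2 ∂μ := integral_sub Ilg If2
  rw [eC] at hcomm
  rw [eA, eB] at hint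
  have hsq : ((∫ l, f l ∂μ) - f u) ^ 2 ≤ 0 := by nlinarith [hint, hcomm]
  refine ⟨hsq, ?_⟩
  have : ((∫ l, f l ∂μ) - f u) ^ 2 = 0 := le_antisymm hsq (sq_nonneg _)
  have := pow_eq_zero_iff (n := 2) (by norm_num) |>.mp this
  linarith [this]
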